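/- Schröter's formula holds: θ₃(x; (r/L)τ) θ₃(y; ((L-r)/L)τ) = ∑_{k=0}^{L-1} exp(iπ(r/L)τ k²) exp(2πi k x) θ₃(x - y + (rk/L)τ; τ) θ₃((L-r)x + r y + (r(L-r)k/L)τ; r(L-r)τ). -/

import Mathlib

open Complex Real BigOperators

/-- The Jacobi theta function `θ₃(z;τ)`. -/
noncomputable def jacobiTheta₃ (z τ : ℂ) : ℂ :=
  ∑' k : ℤ, Complex.exp ((π : ℂ) * Complex.I * τ * (k : ℂ) ^ 2) *
    Complex.exp (2 * (π : ℂ) * Complex.I * (k : ℂ) * z)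

lemma theta3_eq (z τ : ℂ) : jacobiTheta₃ z τ = ∑' n : ℤ, jacobiTheta₂_term n z τ := by
  refine tsum_congr fun n => ?_
  rw [jacobiTheta₂_term, ← Complex.exp_add]
  ring_nf

lemma summable_norm_theta_term {τ : ℂ} (hτ : 0 < τ.im) (z : ℂ) :
    Summable fun n : ℤ => ‖jacobiTheta₂_term n z τ‖ := by
  apply Summable.of_norm_bounded (summable_pow_mul_jacobiTheta₂_term_bound |z.im| hτ 0)
  intro n
  simpa only [pow_zero, one_mul, norm_norm] using norm_jacobiTheta₂_term_le hτ le_rfl le_rfl n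

lemma im_pos_mul {s : ℝ} (hs : 0 < s) {τ : ℂ} (hτ : 0 < τ.im) : 0 < ((s : ℂ) * τ).im := by
  simp only [Complex.mul_im, Complex.ofReal_re, Complex.ofReal_im, zero_mul, add_zero]; positivity

def schEquiv (L r : ℕ) (hrL : r < L) : (Fin L × ℤ × ℤ) ≃ (ℤ × ℤ) where
  toFun w := ((w.1 : ℤ) + w.2.1 + ((L : ℤ) - r) * w.2.2, (r : ℤ) * w.2.2 - w.2.1)
  invFun w :=
    (⟨((w.1 + w.2) % L).toNat, by
        have hL : (0 : ℤ) < L := by exact_mod_cast Nat.pos_of_ne_zero (by omega)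
        have h1 : 0 ≤ (w.1 + w.2) % (L : ℤ) := Int.emod_nonneg _ hL.ne'
        have h2 : (w.1 + w.2) % (L : ℤ) < L := Int.emod_lt_of_pos _ hL
        omega⟩,
      ((r : ℤ) * ((w.1 + w.2) / L) - w.2, (w.1 + w.2) / L))
  left_inv := by
    rintro ⟨k, p, q⟩
    have hL : (0 : ℤ) < L := by exact_mod_cast Nat.pos_of_ne_zero (by omega)
    have key : ((k : ℤ) + p + ((L : ℤ) - r) * q) + ((r : ℤ) * q - p) = (k : ℤ) + (L : ℤ) * q := by
      ring
    have hk0 : (0 : ℤ) ≤ (k : ℤ) := Int.ofNat_nonneg _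
    have hkL : (k : ℤ) < L := by exact_mod_cast k.2
    have hmod : (((k : ℤ) + p + ((L : ℤ) - r) * q) + ((r : ℤ) * q - p)) % L = (k : ℤ) := by
      rw [key, Int.add_mul_emod_self_left, Int.emod_eq_of_lt hk0 hkL]
    have hdiv : (((k : ℤ) + p + ((L : ℤ) - r) * q) + ((r : ℤ) * q - p)) / L = q := by
      rw [key, Int.add_mul_ediv_left _ _ hL.ne', Int.ediv_eq_zero_of_lt hk0 hkL, zero_add]
    ext
    · simp only [hmod]; exact Int.toNat_natCast k
    · simp only [hdiv]; ring
    · simp only [hdiv]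
  right_inv := by
    rintro ⟨m, n⟩
    have hL : (0 : ℤ) < L := by exact_mod_cast Nat.pos_of_ne_zero (by omega)
    have h1 : 0 ≤ (m + n) % (L : ℤ) := Int.emod_nonneg _ hL.ne'
    have hde : (L : ℤ) * ((m + n) / L) + (m + n) % L = m + n := Int.mul_ediv_add_emod _ _
    ext
    · simp only [Int.toNat_of_nonneg h1]
      linear_combination hde
    · ring

lemma schEquiv_apply (L r : ℕ) (hrL : r < L) (w : Fin L × ℤ × ℤ) :
    schEquiv L r hrL w = ((w.1 : ℤ) + w.2.1 + ((L : ℤ) - r) * w.2.2, (r : ℤ) * w.2.2 - w.2.1) :=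
  rfl

set_option maxHeartbeats 2000000 in
/-- Schröter's formula. -/
theorem schroter_formula (L r : ℕ) (hr : 0 < r) (hrL : r < L) (τ : ℂ) (hτ : 0 < τ.im)
    (x y : ℂ) :
    jacobiTheta₃ x ((r : ℂ) / (L : ℂ) * τ) *
        jacobiTheta₃ y (((L : ℂ) - (r : ℂ)) / (L : ℂ) * τ) =
      ∑ k ∈ Finset.range L,
        Complex.exp ((π : ℂ) * Complex.I * ((r : ℂ) / (L : ℂ)) * τ * (k : ℂ) ^ 2) *
          Complex.exp (2 * (π : ℂ) * Complex.I * (k : ℂ) * x) *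
          jacobiTheta₃ (x - y + (r : ℂ) * (k : ℂ) / (L : ℂ) * τ) τ *
          jacobiTheta₃ (((L : ℂ) - (r : ℂ)) * x + (r : ℂ) * y +
              (r : ℂ) * ((L : ℂ) - (r : ℂ)) * (k : ℂ) / (L : ℂ) * τ)
            ((r : ℂ) * ((L : ℂ) - (r : ℂ)) * τ) := by
  have hL0 : (L : ℂ) ≠ 0 := Nat.cast_ne_zero.mpr (by omega)
  have hrR : (0 : ℝ) < (r : ℝ) / L := by
    have : (0:ℝ) < L := by exact_mod_cast (by omega : 0 < L)
    positivity
  have hLrR : (0 : ℝ) < ((L : ℝ) - r) / L := by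
    have h1 : (0:ℝ) < L := by exact_mod_cast (by omega : 0 < L)
    have h2 : (r:ℝ) < L := by exact_mod_cast hrL
    have := sub_pos.mpr h2
    positivity
  have hrLrR : (0 : ℝ) < (r : ℝ) * ((L : ℝ) - r) := by
    have h2 : (r:ℝ) < L := by exact_mod_cast hrL
    have h3 : (0:ℝ) < r := by exact_mod_cast hr
    have := sub_pos.mpr h2
    positivity
  have e1 : (r : ℂ) / L = (((r : ℝ) / L : ℝ) : ℂ) := by push_cast; ring
  have e2 : (L : ℂ) - r = ((((L : ℝ) - r) : ℝ) : ℂ) := by push_cast; ring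
  have h1 : 0 < ((r : ℂ) / L * τ).im := by rw [e1]; exact im_pos_mul hrR hτ
  have h2 : 0 < (((L : ℂ) - r) / L * τ).im := by
    rw [e2, ← Complex.ofReal_natCast L, ← Complex.ofReal_div]; exact im_pos_mul hLrR hτ
  have h3 : 0 < ((r : ℂ) * ((L : ℂ) - r) * τ).im := by
    rw [e2, ← Complex.ofReal_natCast r, ← Complex.ofReal_mul]; exact im_pos_mul hrLrR hτ
  set τ₁ := (r : ℂ) / L * τ with hτ₁
  set τ₂ := ((L : ℂ) - r) / L * τ with hτ₂
  set τ₃ := (r : ℂ) * ((L : ℂ) - r) * τ with hτ₃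
  have hs1 := summable_norm_theta_term h1 x
  have hs2 := summable_norm_theta_term h2 y
  -- RHS: rewrite each summand as a tsum over ℤ × ℤ
  have rhs_eq : ∀ k : ℕ,
      Complex.exp ((π : ℂ) * Complex.I * ((r : ℂ) / L) * τ * (k : ℂ) ^ 2) *
          Complex.exp (2 * (π : ℂ) * Complex.I * (k : ℂ) * x) *
          jacobiTheta₃ (x - y + (r : ℂ) * k / L * τ) τ *
          jacobiTheta₃ (((L : ℂ) - r) * x + (r : ℂ) * y + (r : ℂ) * ((L : ℂ) - r) * k / L * τ) τ₃
        = ∑' pq : ℤ × ℤ,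
            Complex.exp ((π : ℂ) * Complex.I * ((r : ℂ) / L) * τ * (k : ℂ) ^ 2) *
              Complex.exp (2 * (π : ℂ) * Complex.I * (k : ℂ) * x) *
              (jacobiTheta₂_term pq.1 (x - y + (r : ℂ) * k / L * τ) τ *
               jacobiTheta₂_term pq.2
                 (((L : ℂ) - r) * x + (r : ℂ) * y + (r : ℂ) * ((L : ℂ) - r) * k / L * τ) τ₃) := by
    intro k
    rw [theta3_eq, theta3_eq, mul_assoc,
      tsum_mul_tsum_of_summable_norm (summable_norm_theta_term hτ _)
        (summable_norm_theta_term h3 _), ← tsum_mul_left]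
  simp only [rhs_eq]
  -- LHS as a tsum over ℤ × ℤ
  rw [theta3_eq, theta3_eq, tsum_mul_tsum_of_summable_norm hs1 hs2]
  have hFsum : Summable (fun mn : ℤ × ℤ =>
      jacobiTheta₂_term mn.1 x τ₁ * jacobiTheta₂_term mn.2 y τ₂) :=
    summable_mul_of_summable_norm (f := fun n : ℤ => jacobiTheta₂_term n x τ₁)
      (g := fun n : ℤ => jacobiTheta₂_term n y τ₂) hs1 hs2
  have hcomp : Summable (fun w : Fin L × ℤ × ℤ =>
      jacobiTheta₂_term ((schEquiv L r hrL) w).1 x τ₁ *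
        jacobiTheta₂_term ((schEquiv L r hrL) w).2 y τ₂) :=
    ((schEquiv L r hrL).summable_iff (f := fun mn : ℤ × ℤ =>
      jacobiTheta₂_term mn.1 x τ₁ * jacobiTheta₂_term mn.2 y τ₂)).mpr hFsum
  have main : (∑' mn : ℤ × ℤ, jacobiTheta₂_term mn.1 x τ₁ * jacobiTheta₂_term mn.2 y τ₂)
      = ∑ k : Fin L, ∑' pq : ℤ × ℤ,
          jacobiTheta₂_term ((schEquiv L r hrL) (k, pq)).1 x τ₁ *
            jacobiTheta₂_term ((schEquiv L r hrL) (k, pq)).2 y τ₂ := by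
    rw [← (schEquiv L r hrL).tsum_eq (fun mn : ℤ × ℤ =>
        jacobiTheta₂_term mn.1 x τ₁ * jacobiTheta₂_term mn.2 y τ₂),
      Summable.tsum_prod' hcomp (fun b => hcomp.prod_factor b), tsum_fintype]
  rw [main, Finset.sum_range]
  refine Finset.sum_congr rfl fun k _ => ?_
  refine tsum_congr fun pq => ?_
  simp only [schEquiv_apply, jacobiTheta₂_term]
  simp only [← Complex.exp_add]
  rw [hτ₁, hτ₂, hτ₃]
  congr 1
  push_cast
  field_simp
  ring
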